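/- If A₁, ..., A_k are families of s-element subsets of [n] with n ≥ c + k(s−c) and 0 ≤ c ≤ s−1, such that there is no choice of sets A_i ∈ A_i (one from each family) with pairwise intersections all equal to a common set C of size exactly c and with each A_i \ C nonempty, then the sum of the sizes |A₁| + ... + |A_k| is at most (k−1)·C(n,s). -/

import Mathlib

open Finset

/-- Any two finsets of the same size in `Fin n` are related by a permutation. -/
lemma exists_perm_image_aux {n : ℕ} {S T : Finset (Fin n)} (h : S.card = T.card) :
    ∃ π : Equiv.Perm (Fin n), S.image π = T := by
  classical
  let e : {x // x ∈ S} ≃ {x // x ∈ T} := Finset.equivOfCardEq h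
  refine ⟨e.extendSubtype, ?_⟩
  apply Finset.eq_of_subset_of_card_le
  · intro x hx
    obtain ⟨y, hy, rfl⟩ := Finset.mem_image.mp hx
    exact e.extendSubtype_mem y hy
  · rw [Finset.card_image_of_injective _ (Equiv.injective _), ← h]

/-- If `A 0, …, A (k-1)` are families of `s`-element subsets of `[n]`, with
`n ≥ c + k(s-c)` and `0 ≤ c ≤ s-1`, containing no multicolor sunflower with
`k` petals and core size `c`, then `∑ |A i| ≤ (k-1) · C(n,s)`. -/
theorem sum_bound_uniform_no_sunflower_core (n k s c : ℕ)
    (hs : 1 ≤ s) (hk : 2 ≤ k) (hc : c ≤ s - 1) (hn : c + k * (s - c) ≤ n)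
    (A : Fin k → Finset (Finset (Fin n)))
    (hunif : ∀ i, ∀ S ∈ A i, S.card = s)
    (hfree : ¬ ∃ (f : Fin k → Finset (Fin n)) (C : Finset (Fin n)),
      (∀ i, f i ∈ A i) ∧ C.card = c ∧
      (∀ i j, i ≠ j → f i ∩ f j = C) ∧
      (∀ i, (f i \ C).Nonempty)) :
    ∑ i, (A i).card ≤ (k - 1) * n.choose s := by
  classical
  have hcs : c < s := by omega
  have hk2 : 2 * (s - c) ≤ k * (s - c) := Nat.mul_le_mul_right _ hk
  have hsn : s ≤ n := by omega
  have hk0 : 0 < k := by omega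
  let i0 : Fin k := ⟨0, hk0⟩
  -- The set of "sunflower skeletons": a core of size c and k pairwise disjoint petals.
  set Sun : Finset (Finset (Fin n) × (Fin k → Finset (Fin n))) :=
    Finset.univ.filter (fun σ => σ.1.card = c ∧ (∀ i, (σ.2 i).card = s - c) ∧
      (∀ i, Disjoint σ.1 (σ.2 i)) ∧ (∀ i j, i ≠ j → Disjoint (σ.2 i) (σ.2 j))) with hSunDef
  have mem_Sun : ∀ σ, σ ∈ Sun ↔ σ.1.card = c ∧ (∀ i, (σ.2 i).card = s - c) ∧
      (∀ i, Disjoint σ.1 (σ.2 i)) ∧ (∀ i j, i ≠ j → Disjoint (σ.2 i) (σ.2 j)) := by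
    intro σ; simp [hSunDef]
  have union_card : ∀ σ ∈ Sun, ∀ i : Fin k, (σ.1 ∪ σ.2 i).card = s := by
    intro σ hσ i
    obtain ⟨h1, h2, h3, _⟩ := (mem_Sun σ).mp hσ
    rw [Finset.card_union_of_disjoint (h3 i), h1, h2 i]
    omega
  -- fiber constancy via permutations
  have fiber_const : ∀ (i : Fin k) (S T : Finset (Fin n)), S.card = s → T.card = s →
      (Sun.filter (fun σ => σ.1 ∪ σ.2 i = S)).card
        = (Sun.filter (fun σ => σ.1 ∪ σ.2 i = T)).card := by
    intro i S T hS hT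
    obtain ⟨π, hπ⟩ := exists_perm_image_aux (hS.trans hT.symm)
    have hπ' : T.image π.symm = S := by
      rw [← hπ, Finset.image_image]
      simp
    have key : ∀ (ρ : Equiv.Perm (Fin n)) (σ : _), σ ∈ Sun →
        (σ.1.image ρ, fun j => (σ.2 j).image ρ) ∈ Sun := by
      intro ρ σ hσ
      obtain ⟨h1, h2, h3, h4⟩ := (mem_Sun σ).mp hσ
      refine (mem_Sun _).mpr ⟨?_, fun j => ?_, fun j => ?_, fun a b hab => ?_⟩
      · rw [Finset.card_image_of_injective _ ρ.injective]; exact h1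
      · rw [Finset.card_image_of_injective _ ρ.injective]; exact h2 j
      · exact (Finset.disjoint_image ρ.injective).mpr (h3 j)
      · exact (Finset.disjoint_image ρ.injective).mpr (h4 a b hab)
    apply Finset.card_nbij'
      (fun σ => (σ.1.image π, fun j => (σ.2 j).image π))
      (fun σ => (σ.1.image π.symm, fun j => (σ.2 j).image π.symm))
    · intro σ hσ
      rw [Finset.mem_coe, Finset.mem_filter] at hσ ⊢
      refine ⟨key π σ hσ.1, ?_⟩
      show σ.1.image π ∪ (σ.2 i).image π = T
      rw [← Finset.image_union, hσ.2, hπ]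
    · intro σ hσ
      rw [Finset.mem_coe, Finset.mem_filter] at hσ ⊢
      refine ⟨key π.symm σ hσ.1, ?_⟩
      show σ.1.image π.symm ∪ (σ.2 i).image π.symm = S
      rw [← Finset.image_union, hσ.2, hπ']
    · intro σ hσ
      ext x
      · simp [Finset.image_image]
      · simp [Finset.image_image]
    · intro σ hσ
      ext x
      · simp [Finset.image_image]
      · simp [Finset.image_image]
  -- a reference s-set
  have hS0 : ∀ m ∈ Finset.range s, m < n := fun m hm => lt_of_lt_of_le (Finset.mem_range.mp hm) hsn
  set S0 : Finset (Fin n) := (Finset.range s).attachFin hS0 with hS0def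
  have hS0card : S0.card = s := by rw [hS0def, Finset.card_attachFin, Finset.card_range]
  -- total count:  |Sun| = C(n,s) * (size of any fiber)
  have hN : 0 < n.choose s := Nat.choose_pos hsn
  have total : ∀ i : Fin k,
      Sun.card = n.choose s * (Sun.filter (fun σ => σ.1 ∪ σ.2 i = S0)).card := by
    intro i
    have h := Finset.card_eq_sum_card_fiberwise
      (f := fun σ => σ.1 ∪ σ.2 i) (s := Sun) (t := Finset.powersetCard s Finset.univ)
      (fun σ hσ => by
        rw [Finset.mem_coe, Finset.mem_powersetCard]
        exact ⟨Finset.subset_univ _, union_card σ hσ i⟩)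
    rw [h]
    rw [Finset.sum_congr rfl (fun S hS => fiber_const i S S0
      ((Finset.mem_powersetCard.mp hS).2) hS0card)]
    rw [Finset.sum_const, Finset.card_powersetCard, smul_eq_mul]
    simp
  set m : ℕ := (Sun.filter (fun σ => σ.1 ∪ σ.2 i0 = S0)).card with hmdef
  -- every fiber over an s-set has size m
  have fiber_m : ∀ (i : Fin k) (S : Finset (Fin n)), S.card = s →
      (Sun.filter (fun σ => σ.1 ∪ σ.2 i = S)).card = m := by
    intro i S hS
    rw [fiber_const i S S0 hS hS0card]
    exact Nat.eq_of_mul_eq_mul_left hN ((total i).symm.trans (total i0))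
  -- counting skeletons whose i-th flower lands in A i
  have countA : ∀ i : Fin k,
      (Sun.filter (fun σ => σ.1 ∪ σ.2 i ∈ A i)).card = (A i).card * m := by
    intro i
    have h := Finset.card_eq_sum_card_fiberwise
      (f := fun σ => σ.1 ∪ σ.2 i) (s := Sun.filter (fun σ => σ.1 ∪ σ.2 i ∈ A i))
      (t := A i)
      (fun σ hσ => (Finset.mem_filter.mp hσ).2)
    rw [h]
    have : ∀ S ∈ A i,
        ((Sun.filter (fun σ => σ.1 ∪ σ.2 i ∈ A i)).filter
          (fun σ => σ.1 ∪ σ.2 i = S)).card = m := by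
      intro S hS
      rw [Finset.filter_filter]
      have : (Sun.filter (fun σ => (σ.1 ∪ σ.2 i ∈ A i) ∧ σ.1 ∪ σ.2 i = S))
          = Sun.filter (fun σ => σ.1 ∪ σ.2 i = S) := by
        apply Finset.filter_congr
        intro σ hσ
        constructor
        · exact fun h => h.2
        · exact fun h => ⟨h ▸ hS, h⟩
      rw [this]
      exact fiber_m i S (hunif i S hS)
    rw [Finset.sum_congr rfl this, Finset.sum_const, smul_eq_mul]
  -- Sun is nonempty, hence m > 0
  have hbd : ∀ i : Fin k, ∀ x ∈ Finset.Ico (c + i.1 * (s - c)) (c + i.1 * (s - c) + (s - c)),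
      x < n := by
    intro i x hx
    rw [Finset.mem_Ico] at hx
    have h1 : (i.1 + 1) * (s - c) ≤ k * (s - c) := Nat.mul_le_mul_right _ i.isLt
    have h2 : (i.1 + 1) * (s - c) = i.1 * (s - c) + (s - c) := by ring
    omega
  have hbd0 : ∀ x ∈ Finset.range c, x < n := fun x hx =>
    lt_of_lt_of_le (Finset.mem_range.mp hx) (by omega)
  set σ0 : Finset (Fin n) × (Fin k → Finset (Fin n)) :=
    ((Finset.range c).attachFin hbd0,
      fun i => (Finset.Ico (c + i.1 * (s - c)) (c + i.1 * (s - c) + (s - c))).attachFin (hbd i))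
    with hσ0def
  have hσ0 : σ0 ∈ Sun := by
    refine (mem_Sun σ0).mpr ⟨?_, fun i => ?_, fun i => ?_, fun i j hij => ?_⟩
    · rw [hσ0def]; simp [Finset.card_attachFin]
    · rw [hσ0def]; simp [Finset.card_attachFin]
    · rw [hσ0def, Finset.disjoint_left]
      intro a ha ha'
      simp only [Finset.mem_attachFin, Finset.mem_range, Finset.mem_Ico] at ha ha'
      omega
    · rw [hσ0def, Finset.disjoint_left]
      intro a ha ha'
      simp only [Finset.mem_attachFin, Finset.mem_Ico] at ha ha'
      have hij' : i.1 ≠ j.1 := fun h => hij (Fin.ext h)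
      rcases Nat.lt_or_ge i.1 j.1 with h | h
      · have := Nat.mul_le_mul_right (s - c) (show i.1 + 1 ≤ j.1 from h)
        have h2 : (i.1 + 1) * (s - c) = i.1 * (s - c) + (s - c) := by ring
        omega
      · have hji : j.1 + 1 ≤ i.1 := by omega
        have := Nat.mul_le_mul_right (s - c) hji
        have h2 : (j.1 + 1) * (s - c) = j.1 * (s - c) + (s - c) := by ring
        omega
  have hm : 0 < m := by
    have hcard : (σ0.1 ∪ σ0.2 i0).card = s := union_card σ0 hσ0 i0
    rw [← fiber_m i0 (σ0.1 ∪ σ0.2 i0) hcard]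
    apply Finset.card_pos.mpr
    exact ⟨σ0, Finset.mem_filter.mpr ⟨hσ0, rfl⟩⟩
  -- sunflower-freeness: each skeleton has at most k-1 coordinates landing in the families
  have hfreebd : ∀ σ ∈ Sun,
      (Finset.univ.filter (fun i : Fin k => σ.1 ∪ σ.2 i ∈ A i)).card ≤ k - 1 := by
    intro σ hσ
    by_contra hcon
    push_neg at hcon
    have hle : (Finset.univ.filter (fun i : Fin k => σ.1 ∪ σ.2 i ∈ A i)).card ≤ k := by
      calc _ ≤ (Finset.univ : Finset (Fin k)).card := Finset.card_filter_le _ _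
        _ = k := by simp
    have heq : (Finset.univ.filter (fun i : Fin k => σ.1 ∪ σ.2 i ∈ A i))
        = Finset.univ := by
      apply Finset.eq_univ_of_card
      have : k ≤ (Finset.univ.filter (fun i : Fin k => σ.1 ∪ σ.2 i ∈ A i)).card := by omega
      simp only [Finset.card_univ, Fintype.card_fin]
      omega
    have hall : ∀ i : Fin k, σ.1 ∪ σ.2 i ∈ A i := by
      intro i
      have : i ∈ Finset.univ.filter (fun i : Fin k => σ.1 ∪ σ.2 i ∈ A i) := by
        rw [heq]; exact Finset.mem_univ i
      exact (Finset.mem_filter.mp this).2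
    obtain ⟨h1, h2, h3, h4⟩ := (mem_Sun σ).mp hσ
    apply hfree
    refine ⟨fun i => σ.1 ∪ σ.2 i, σ.1, hall, h1, fun i j hij => ?_, fun i => ?_⟩
    · ext x
      have hdij := Finset.disjoint_left.mp (h4 i j hij)
      have hdi := Finset.disjoint_left.mp (h3 i)
      have hdj := Finset.disjoint_left.mp (h3 j)
      simp only [Finset.mem_inter, Finset.mem_union]
      constructor
      · rintro ⟨hi | hi, hj | hj⟩
        · exact hi
        · exact hi
        · exact hj
        · exact absurd hj (hdij hi)
      · exact fun h => ⟨Or.inl h, Or.inl h⟩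
    · rw [Finset.union_sdiff_cancel_left (h3 i)]
      rw [← Finset.card_pos, h2 i]
      omega
  -- put it together
  have key : m * ∑ i, (A i).card ≤ m * ((k - 1) * n.choose s) := by
    have e1 : m * ∑ i, (A i).card
        = ∑ σ ∈ Sun, (Finset.univ.filter (fun i : Fin k => σ.1 ∪ σ.2 i ∈ A i)).card := by
      rw [Finset.mul_sum]
      calc ∑ i, m * (A i).card
          = ∑ i : Fin k, (Sun.filter (fun σ => σ.1 ∪ σ.2 i ∈ A i)).card := by
            refine Finset.sum_congr rfl fun i _ => ?_
            rw [countA i, Nat.mul_comm]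
        _ = ∑ i : Fin k, ∑ σ ∈ Sun, if σ.1 ∪ σ.2 i ∈ A i then 1 else 0 := by
            refine Finset.sum_congr rfl fun i _ => ?_
            rw [Finset.card_filter]
        _ = ∑ σ ∈ Sun, ∑ i : Fin k, if σ.1 ∪ σ.2 i ∈ A i then 1 else 0 :=
            Finset.sum_comm
        _ = _ := by
            refine Finset.sum_congr rfl fun σ _ => ?_
            rw [Finset.card_filter]
    rw [e1]
    calc ∑ σ ∈ Sun, (Finset.univ.filter (fun i : Fin k => σ.1 ∪ σ.2 i ∈ A i)).card
        ≤ ∑ _σ ∈ Sun, (k - 1) := Finset.sum_le_sum hfreebd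
      _ = Sun.card * (k - 1) := by rw [Finset.sum_const, smul_eq_mul]
      _ = (n.choose s * m) * (k - 1) := by rw [← total i0]
      _ = m * ((k - 1) * n.choose s) := by ring
  exact Nat.le_of_mul_le_mul_left key hm
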